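/- Let R be a ring. Then R is a left small ring (R as a left R-module is a small module) if and only if every injective left R-module M satisfies Rad(M) = M, where Rad(M) is the intersection of all maximal proper submodules of M (equal to M if M has no maximal proper submodule). -/

import Mathlib

universe u

/-- A left `R`-module `K` is a *small module* if there exist a left `R`-module `L` and an
injective `R`-linear map `f : K → L` whose image is a superfluous submodule of `L`. -/
def IsSmallModule (R : Type u) [Ring R] (K : Type u) [AddCommGroup K] [Module R K] : Prop :=
  ∃ (L : Type u) (_ : AddCommGroup L) (_ : Module R L) (f : K →ₗ[R] L),
    Function.Injective f ∧
      ∀ X : Submodule R L, LinearMap.range f ⊔ X = ⊤ → X = ⊤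

/-- If `L` has no coatoms (maximal submodules), then any cyclic submodule is superfluous. -/
lemma aux_superfluous {R : Type u} [Ring R] {L : Type u} [AddCommGroup L] [Module R L]
    (hco : ∀ m : Submodule R L, ¬ IsCoatom m) (x : L) (X : Submodule R L)
    (hX : (Submodule.span R {x}) ⊔ X = ⊤) : X = ⊤ := by
  by_contra hXne
  -- pass to the quotient `L ⧸ X`, which is cyclic and nonzero
  haveI : Nontrivial (L ⧸ X) :=
    Submodule.Quotient.nontrivial_iff.2 hXne
  have htop : (⊤ : Submodule R (L ⧸ X)) = Submodule.span R {X.mkQ x} := by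
    have h1 : Submodule.map X.mkQ (⊤ : Submodule R L) = ⊤ := by
      rw [Submodule.map_top, Submodule.range_mkQ]
    have h2 : Submodule.map X.mkQ X = ⊥ := by
      rw [eq_bot_iff]
      rintro y ⟨z, hz, rfl⟩
      simpa [Submodule.Quotient.mk_eq_zero] using hz
    calc (⊤ : Submodule R (L ⧸ X)) = Submodule.map X.mkQ (Submodule.span R {x} ⊔ X) := by
          rw [hX, h1]
      _ = Submodule.span R {X.mkQ x} := by
          rw [Submodule.map_sup, h2, sup_bot_eq, Submodule.map_span, Set.image_singleton]
  haveI : IsCoatomic (Submodule R (L ⧸ X)) := by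
    apply CompleteLattice.coatomic_of_top_compact
    rw [htop]
    exact Submodule.singleton_span_isCompactElement _
  obtain h | ⟨m', hm', -⟩ := eq_top_or_exists_le_coatom (⊥ : Submodule R (L ⧸ X))
  · exact absurd h.symm bot_ne_top.symm
  · -- pull back the coatom `m'` to a coatom of `L`
    haveI : IsSimpleModule R ((L ⧸ X) ⧸ m') := isSimpleModule_iff_isCoatom.2 hm'
    have hsurj : Function.Surjective (m'.mkQ ∘ₗ X.mkQ) :=
      (Submodule.mkQ_surjective m').comp (Submodule.mkQ_surjective X)
    exact hco _ (LinearMap.isCoatom_ker_of_surjective hsurj)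

/-- `R` is a left small ring iff every injective left `R`-module `M` satisfies `Rad(M) = M`,
where `Rad(M)` is the intersection of all maximal proper submodules of `M`. -/
theorem stmt_19 (R : Type u) [Ring R] :
    IsSmallModule R R ↔
      ∀ (M : Type u) [AddCommGroup M] [Module R M], Module.Injective R M →
        sInf {m : Submodule R M | IsCoatom m} = ⊤ := by
  constructor
  · rintro ⟨L, _, _, ι, hinj, hsmall⟩ M _ _ hM
    rw [sInf_eq_top]
    rintro m (hm : IsCoatom m)
    exfalso
    -- pick `x ∉ m`
    obtain ⟨x, -, hx⟩ : ∃ x, x ∈ (⊤ : Submodule R M) ∧ x ∉ m :=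
      SetLike.exists_of_lt (lt_top_iff_ne_top.2 hm.1)
    -- extend `r ↦ r • x` along `ι : R ↪ L` using injectivity of `M`
    obtain ⟨h, hh⟩ := hM.out ι hinj (LinearMap.toSpanSingleton R M x)
    set X : Submodule R L := Submodule.comap h m with hXdef
    have hsup : m ⊔ Submodule.span R {x} = ⊤ := by
      refine hm.2 _ (lt_of_le_of_ne le_sup_left ?_)
      intro hEq
      apply hx
      rw [hEq]
      exact Submodule.mem_sup_right (Submodule.mem_span_singleton_self x)
    have hXtop : LinearMap.range ι ⊔ X = ⊤ := by
      rw [eq_top_iff]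
      rintro l -
      have : h l ∈ m ⊔ Submodule.span R {x} := hsup ▸ Submodule.mem_top
      obtain ⟨y, hy, z, hz, hyz⟩ := Submodule.mem_sup.1 this
      obtain ⟨r, rfl⟩ := Submodule.mem_span_singleton.1 hz
      refine Submodule.mem_sup.2 ⟨ι r, ⟨r, rfl⟩, l - ι r, ?_, by abel⟩
      show h (l - ι r) ∈ m
      rw [map_sub, hh r]
      simpa [LinearMap.toSpanSingleton_apply, ← hyz] using hy
    have hXT : X = ⊤ := hsmall X hXtop
    have hX1 : ι 1 ∈ X := hXT.symm ▸ Submodule.mem_top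
    have hxm : h (ι 1) ∈ m := Submodule.mem_comap.1 hX1
    rw [hh 1, LinearMap.toSpanSingleton_apply, one_smul] at hxm
    exact hx hxm
  · intro H
    -- embed `R` into an injective module
    obtain ⟨J, ι, hJinj, hιinj⟩ :
        ∃ (J : ModuleCat.{u} R) (ι : R →ₗ[R] (J : Type u)),
          CategoryTheory.Injective J ∧ Function.Injective ι := by
      refine ⟨CategoryTheory.Injective.under (ModuleCat.of R R),
        (CategoryTheory.Injective.ι (ModuleCat.of R R)).hom, inferInstance, ?_⟩
      exact (ModuleCat.mono_iff_injective _).1 (CategoryTheory.Injective.ι_mono _)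
    haveI : CategoryTheory.Injective (ModuleCat.of R J) := hJinj
    haveI hJmod : Module.Injective R J := Module.injective_module_of_injective_object R J
    have hrad := H J hJmod
    have hco : ∀ m : Submodule R (J : Type u), ¬ IsCoatom m := by
      intro m hm
      exact hm.1 (top_le_iff.1 (hrad ▸ sInf_le (by exact hm)))
    refine ⟨J, inferInstance, inferInstance, ι, hιinj, ?_⟩
    intro X hX
    have hrange : LinearMap.range ι = Submodule.span R {ι 1} := by
      apply le_antisymm
      · rintro y ⟨r, rfl⟩
        exact Submodule.mem_span_singleton.2 ⟨r, by rw [← map_smul, smul_eq_mul, mul_one]⟩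
      · rw [Submodule.span_singleton_le_iff_mem]
        exact ⟨1, rfl⟩
    exact aux_superfluous hco (ι 1) X (by rwa [← hrange])
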